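/- Let G be a quasi-acyclic 2-path-bounded oriented graph without multiple edges and triangles, and let R be any complete system of relations for G. Let R_N ⊆ R be the subset of relations in which both sides contain at least one non-loop edge. Then |R_N| ≥ 𝔯𝔥(G). -/

import Mathlib

/-- An oriented graph: finite nonempty sets of vertices and edges with
origin and tail maps. -/
structure OrientedGraph where
  V : Type
  E : Type
  [fintypeV : Fintype V]
  [fintypeE : Fintype E]
  [nonemptyV : Nonempty V]
  [nonemptyE : Nonempty E]
  o : E → V
  t : E → V

attribute [instance] OrientedGraph.fintypeV OrientedGraph.fintypeE
  OrientedGraph.nonemptyV OrientedGraph.nonemptyE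

namespace OrientedGraph

variable (G : OrientedGraph)

/-- `G.IsPath p u v` : the edge sequence `p` is a path from `u` to `v`
(consecutive edges are composable; paths of length 0 at any vertex are allowed). -/
def IsPath (p : List G.E) (u v : G.V) : Prop :=
  List.Chain' (fun e f => G.t e = G.o f) p ∧
  ((p = [] ∧ u = v) ∨
    ∃ h : p ≠ [], u = G.o (p.head h) ∧ v = G.t (p.getLast h))

/-- The label of an edge sequence: the product of the labels of its edges
(the empty sequence maps to `1`). -/
def labelProd {M : Type} [Monoid M] (l : G.E → M) (s : List G.E) : M :=
  (s.map l).prod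

/-- The diagram `(G, l)` is commutative: any two paths with the same origin and
the same tail have equal labels. -/
def IsCommutative {M : Type} [Monoid M] (l : G.E → M) : Prop :=
  ∀ (u v : G.V) (p₁ p₂ : List G.E),
    G.IsPath p₁ u v → G.IsPath p₂ u v → G.labelProd l p₁ = G.labelProd l p₂

/-- A complete system of relations for `G`: for every monoid `M` and every
labeling `l : E → M`, the diagram `(G, l)` is commutative iff all relations hold. -/
def IsComplete (R : Finset (List G.E × List G.E)) : Prop :=
  ∀ (M : Type) [Monoid M], ∀ l : G.E → M,
    G.IsCommutative l ↔ ∀ r ∈ R, G.labelProd l r.1 = G.labelProd l r.2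

/-- A minimal complete system of relations: no proper subset is complete. -/
def IsMinimalComplete (R : Finset (List G.E × List G.E)) : Prop :=
  G.IsComplete R ∧ ∀ R' : Finset (List G.E × List G.E), R' ⊂ R → ¬ G.IsComplete R'

/-- The commutativity rank `η(G)`: the minimal cardinality of a complete
system of relations for `G`. -/
noncomputable def eta : ℕ :=
  sInf {n : ℕ | ∃ R : Finset (List G.E × List G.E), G.IsComplete R ∧ R.card = n}

/-- `S'` is obtained from `S` by one multiplication. -/
def MulStep (S S' : Set (List G.E)) : Prop :=
  ∃ s ∈ S, ∃ s' ∈ S, S' = S ∪ {s ++ s'}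

/-- `G.mCost S S'` : the minimal number of multiplications needed to obtain `S'`
from `S` (`⊤` if impossible). -/
noncomputable def mCost (S S' : Set (List G.E)) : ℕ∞ :=
  sInf {k : ℕ∞ | ∃ n : ℕ, k = n ∧ ∃ f : ℕ → Set (List G.E),
    f 0 = S ∧ f n = S' ∧ ∀ i < n, G.MulStep (f i) (f (i + 1))}

/-- `S_R`: the set of all edge sequences appearing in the relations of `R`. -/
def relSet (R : Finset (List G.E × List G.E)) : Set (List G.E) :=
  {s | ∃ r ∈ R, s = r.1 ∨ s = r.2}

/-- `ℰ`: the empty sequence together with all one-edge sequences. -/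
def baseSet : Set (List G.E) :=
  {s | s = [] ∨ ∃ e : G.E, s = [e]}

/-- `m(R)`: the minimal number of multiplications needed to build all sequences
appearing in `R`, starting from `ℰ`. -/
noncomputable def mRel (R : Finset (List G.E × List G.E)) : ℕ∞ :=
  sInf {k : ℕ∞ | ∃ S : Set (List G.E), G.relSet R ⊆ S ∧ k = G.mCost G.baseSet S}

/-- The multiplication rank `ν(G)`. -/
noncomputable def nu : ℕ∞ :=
  sInf {k : ℕ∞ | ∃ R : Finset (List G.E × List G.E), G.IsComplete R ∧ k = G.mRel R}

/-- A 4-tuple of edges `(a, b, c, d)` forms a rhomboid. -/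
def IsRhomboid (r : G.E × G.E × G.E × G.E) : Prop :=
  G.o r.1 = G.o r.2.2.1 ∧ G.t r.2.1 = G.t r.2.2.2 ∧
  G.t r.1 = G.o r.2.1 ∧ G.t r.2.2.1 = G.o r.2.2.2 ∧
  G.o r.1 ≠ G.t r.1 ∧ G.o r.1 ≠ G.o r.2.2.2 ∧ G.o r.1 ≠ G.t r.2.2.2 ∧
  G.t r.1 ≠ G.o r.2.2.2 ∧ G.t r.1 ≠ G.t r.2.2.2 ∧ G.o r.2.2.2 ≠ G.t r.2.2.2

/-- Two rhomboids `(a, b, c, d)` and `(a', b', c', d')` are disjoint. -/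
def RhDisjoint (r r' : G.E × G.E × G.E × G.E) : Prop :=
  (r.1 ≠ r'.1 ∨ r.2.1 ≠ r'.2.1) ∧
  (r.1 ≠ r'.2.2.1 ∨ r.2.1 ≠ r'.2.2.2) ∧
  (r.2.2.1 ≠ r'.2.2.1 ∨ r.2.2.2 ≠ r'.2.2.2) ∧
  (r.2.2.1 ≠ r'.1 ∨ r.2.2.2 ≠ r'.2.1)

/-- `𝔯𝔥(G)`: the maximal cardinality of a family of pairwise disjoint rhomboids in `G`. -/
noncomputable def rhNum : ℕ :=
  sSup {n : ℕ | ∃ F : Finset (G.E × G.E × G.E × G.E),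
    (∀ r ∈ F, G.IsRhomboid r) ∧
    (∀ r ∈ F, ∀ r' ∈ F, r ≠ r' → G.RhDisjoint r r') ∧ F.card = n}

/-- `𝔏(G)`: the number of loops of `G`. -/
noncomputable def loopCount : ℕ :=
  Nat.card {e : G.E // G.o e = G.t e}

/-- `G` is quasi-acyclic: no directed cycle visiting two or more distinct vertices. -/
def QuasiAcyclic : Prop :=
  ∀ u v : G.V, u ≠ v →
    ∀ p q : List G.E, G.IsPath p u v → G.IsPath q v u → False

/-- `G` is 2-path-bounded: every oriented path avoiding loop edges has length at most 2. -/
def TwoPathBounded : Prop :=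
  ∀ (p : List G.E) (u v : G.V), G.IsPath p u v →
    (∀ e ∈ p, G.o e ≠ G.t e) → p.length ≤ 2

/-- `G` has a pair of multiple edges. -/
def HasMultipleEdges : Prop :=
  ∃ e e' : G.E, e ≠ e' ∧ G.t e = G.t e' ∧ G.o e = G.o e' ∧ G.t e ≠ G.o e

/-- `G` has a triangle. -/
def HasTriangle : Prop :=
  ∃ a b c : G.E, G.o a = G.o b ∧ G.t b = G.o c ∧ G.t c = G.t a ∧
    G.o a ≠ G.t a ∧ G.o b ≠ G.t b ∧ G.o c ≠ G.t c

/-- `G` has no loops. -/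
def NoLoops : Prop := ∀ e : G.E, G.o e ≠ G.t e

/-- Every edge occurring on either side of the relation `r` is a loop. -/
def AllLoops (r : List G.E × List G.E) : Prop :=
  (∀ e ∈ r.1, G.o e = G.t e) ∧ (∀ e ∈ r.2, G.o e = G.t e)

/-- Both sides of the relation `r` contain at least one non-loop edge. -/
def BothSidesNonLoop (r : List G.E × List G.E) : Prop :=
  (∃ e ∈ r.1, G.o e ≠ G.t e) ∧ (∃ e ∈ r.2, G.o e ≠ G.t e)

end OrientedGraph

/-- The triploid `T(n₁, n₂, n₃, n₀, e)`. -/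
def Triploid (n₁ n₂ n₃ n₀ e : ℕ) (hn₁ : 0 < n₁) (he : n₂ * (n₁ + n₃) ≤ e)
    (he₀ : 0 < e) : OrientedGraph where
  V := Fin n₀ ⊕ Fin n₁ ⊕ Fin n₂ ⊕ Fin n₃
  E := (Fin n₁ × Fin n₂) ⊕ (Fin n₂ × Fin n₃) ⊕ Fin (e - n₂ * (n₁ + n₃))
  nonemptyV := ⟨Sum.inr (Sum.inl ⟨0, hn₁⟩)⟩
  nonemptyE := by
    by_cases h : n₂ * (n₁ + n₃) < e
    · exact ⟨Sum.inr (Sum.inr ⟨0, by omega⟩)⟩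
    · have h2 : 0 < n₂ := by
        rcases Nat.eq_zero_or_pos n₂ with h0 | h0
        · exfalso; subst h0; simp at h; omega
        · exact h0
      exact ⟨Sum.inl (⟨0, hn₁⟩, ⟨0, h2⟩)⟩
  o := Sum.elim (fun p => Sum.inr (Sum.inl p.1))
        (Sum.elim (fun p => Sum.inr (Sum.inr (Sum.inl p.1)))
          (fun _ => Sum.inr (Sum.inl ⟨0, hn₁⟩)))
  t := Sum.elim (fun p => Sum.inr (Sum.inr (Sum.inl p.2)))
        (Sum.elim (fun p => Sum.inr (Sum.inr (Sum.inr p.2)))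
          (fun _ => Sum.inr (Sum.inl ⟨0, hn₁⟩)))


section AuxCommProof

namespace OrientedGraph

attribute [local instance] Classical.propDecidable

variable (G : OrientedGraph)

lemma isPath_nil {u v : G.V} : G.IsPath [] u v ↔ u = v := by
  simp [IsPath, List.Chain']

lemma isPath_cons {e : G.E} {p : List G.E} {u v : G.V} :
    G.IsPath (e :: p) u v ↔ u = G.o e ∧ G.IsPath p (G.t e) v := by
  constructor
  · rintro ⟨hch, h⟩
    rcases h with ⟨h, -⟩ | ⟨h, hu, hv⟩
    · simp at h
    refine ⟨by simpa using hu, ?_⟩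
    cases p with
    | nil => exact ⟨List.isChain_nil, Or.inl ⟨rfl, by simpa using hv.symm⟩⟩
    | cons f q =>
      rcases List.isChain_cons_cons.mp hch with ⟨hef, hch'⟩
      refine ⟨hch', Or.inr ⟨by simp, by simp [hef], ?_⟩⟩
      simpa [List.getLast_cons] using hv
  · rintro ⟨rfl, hch, h⟩
    cases p with
    | nil =>
      rcases h with ⟨-, rfl⟩ | ⟨h, -⟩
      · exact ⟨List.isChain_singleton _, Or.inr ⟨by simp, by simp, by simp⟩⟩
      · simp at h
    | cons f q =>
      rcases h with ⟨h, -⟩ | ⟨hne, hu, hv⟩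
      · simp at h
      refine ⟨List.isChain_cons_cons.mpr ⟨by simpa using hu, hch⟩,
        Or.inr ⟨by simp, by simp, ?_⟩⟩
      simpa [List.getLast_cons] using hv

lemma isPath_append {p q : List G.E} {u v w : G.V}
    (hp : G.IsPath p u v) (hq : G.IsPath q v w) : G.IsPath (p ++ q) u w := by
  induction p generalizing u with
  | nil => rwa [(G.isPath_nil.mp hp)]
  | cons e p ih =>
    rcases (G.isPath_cons).mp hp with ⟨rfl, hp'⟩
    exact (G.isPath_cons).mpr ⟨rfl, ih hp'⟩

lemma isPath_split {p : List G.E} {u v : G.V} {e : G.E}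
    (he : e ∈ p) (hp : G.IsPath p u v) :
    ∃ p₁ p₂ : List G.E, G.IsPath p₁ u (G.o e) ∧ G.IsPath p₂ (G.t e) v := by
  induction p generalizing u with
  | nil => simp at he
  | cons f q ih =>
    rcases (G.isPath_cons).mp hp with ⟨rfl, hp'⟩
    rcases List.mem_cons.mp he with rfl | he'
    · exact ⟨[], q, G.isPath_nil.mpr rfl, hp'⟩
    · obtain ⟨p₁, p₂, h₁, h₂⟩ := ih he' hp'
      exact ⟨f :: p₁, p₂, (G.isPath_cons).mpr ⟨rfl, h₁⟩, h₂⟩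

/-- loop-erasure of an edge sequence -/
noncomputable def era (s : List G.E) : List G.E :=
  s.filter fun e => decide (G.o e ≠ G.t e)

@[simp] lemma era_nil : G.era [] = [] := rfl

lemma era_cons_loop {e : G.E} (h : G.o e = G.t e) (s : List G.E) :
    G.era (e :: s) = G.era s := by
  simp [era, List.filter_cons, h]

lemma era_cons_nl {e : G.E} (h : G.o e ≠ G.t e) (s : List G.E) :
    G.era (e :: s) = e :: G.era s := by
  simp [era, List.filter_cons, h]

lemma mem_era {x : G.E} {s : List G.E} (h : x ∈ G.era s) :
    x ∈ s ∧ G.o x ≠ G.t x := by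
  have := List.mem_filter.mp h
  exact ⟨this.1, by simpa using this.2⟩

lemma isPath_era {p : List G.E} {u v : G.V} (hp : G.IsPath p u v) :
    G.IsPath (G.era p) u v := by
  induction p generalizing u with
  | nil => simpa using hp
  | cons e q ih =>
    rcases (G.isPath_cons).mp hp with ⟨rfl, hp'⟩
    by_cases h : G.o e = G.t e
    · rw [G.era_cons_loop h]; rw [h]; exact ih hp'
    · rw [G.era_cons_nl h]; exact (G.isPath_cons).mpr ⟨rfl, ih hp'⟩

lemma eq_of_era_nil {p : List G.E} {u v : G.V} (hp : G.IsPath p u v)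
    (h : G.era p = []) : u = v := by
  induction p generalizing u with
  | nil => exact G.isPath_nil.mp hp
  | cons e q ih =>
    rcases (G.isPath_cons).mp hp with ⟨rfl, hp'⟩
    by_cases hl : G.o e = G.t e
    · rw [G.era_cons_loop hl] at h; rw [hl]; exact ih hp' h
    · rw [G.era_cons_nl hl] at h; simp at h

/-- in a quasi-acyclic graph, closed paths consist of loops only -/
lemma era_nil_of_closed (hqa : G.QuasiAcyclic) {p : List G.E} {u : G.V}
    (hp : G.IsPath p u u) : G.era p = [] := by
  by_contra h
  obtain ⟨e, he⟩ := List.exists_mem_of_ne_nil _ h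
  obtain ⟨hep, hnl⟩ := G.mem_era he
  obtain ⟨p₁, p₂, h₁, h₂⟩ := G.isPath_split hep hp
  exact hqa (G.o e) (G.t e) hnl [e]
    (p₂ ++ p₁) ((G.isPath_cons).mpr ⟨rfl, G.isPath_nil.mpr rfl⟩)
    (G.isPath_append h₂ h₁)

/-- parallel paths have loop-erasures of equal length -/
lemma era_length_eq (hqa : G.QuasiAcyclic) (hpb : G.TwoPathBounded)
    (htr : ¬ G.HasTriangle) {p₁ p₂ : List G.E} {u v : G.V}
    (h₁ : G.IsPath p₁ u v) (h₂ : G.IsPath p₂ u v) :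
    (G.era p₁).length = (G.era p₂).length := by
  by_cases huv : u = v
  · subst huv
    rw [G.era_nil_of_closed hqa h₁, G.era_nil_of_closed hqa h₂]
  · have key : ∀ p : List G.E, G.IsPath p u v →
        (G.era p).length = 1 ∨ (G.era p).length = 2 := by
      intro p hp
      have hep := G.isPath_era hp
      have hle : (G.era p).length ≤ 2 :=
        hpb _ _ _ hep (fun e he => (G.mem_era he).2)
      have hne : G.era p ≠ [] := fun hn => huv (G.eq_of_era_nil hp hn)
      have : 0 < (G.era p).length := List.length_pos_iff.mpr hne
      omega
    have tri : ∀ p q : List G.E, G.IsPath p u v → G.IsPath q u v →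
        (G.era p).length = 1 → (G.era q).length = 2 → False := by
      intro p q hp hq h1 h2
      obtain ⟨e, he⟩ := List.length_eq_one_iff.mp h1
      have hpe := G.isPath_era hp
      rw [he] at hpe
      obtain ⟨x, y, hxy⟩ := List.length_eq_two.mp h2
      have hqe := G.isPath_era hq
      rw [hxy] at hqe
      rcases (G.isPath_cons).mp hpe with ⟨hue, hpe'⟩
      rcases (G.isPath_cons).mp hqe with ⟨hux, hqe'⟩
      rcases (G.isPath_cons).mp hqe' with ⟨hxy', hqe''⟩
      have hvte : v = G.t e := (G.isPath_nil.mp hpe').symm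
      have hvty : v = G.t y := (G.isPath_nil.mp hqe'').symm
      have hnle : G.o e ≠ G.t e := (G.mem_era (he ▸ List.mem_singleton_self e)).2
      have hnlx : G.o x ≠ G.t x := (G.mem_era (show x ∈ G.era q by rw [hxy]; simp)).2
      have hnly : G.o y ≠ G.t y := (G.mem_era (show y ∈ G.era q by rw [hxy]; simp)).2
      exact htr ⟨e, x, y, by rw [← hue, ← hux], hxy', by rw [← hvty, hvte],
        hnle, hnlx, hnly⟩
    rcases key p₁ h₁ with ha | ha <;> rcases key p₂ h₂ with hb | hb
    · omega
    · exact absurd (tri p₁ p₂ h₁ h₂ ha hb) (fun h => h)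
    · exact absurd (tri p₂ p₁ h₂ h₁ hb ha) (fun h => h)
    · omega

@[simp] lemma labelProd_nil {M : Type} [Monoid M] (l : G.E → M) :
    G.labelProd l [] = 1 := rfl

@[simp] lemma labelProd_cons {M : Type} [Monoid M] (l : G.E → M) (e : G.E)
    (s : List G.E) : G.labelProd l (e :: s) = l e * G.labelProd l s := by
  simp [labelProd]

/-- the length labeling -/
noncomputable def lenLab : G.E → Multiplicative ℤ :=
  fun e => Multiplicative.ofAdd (if G.o e = G.t e then 0 else 1)

lemma labelProd_lenLab (s : List G.E) :
    G.labelProd (G.lenLab) s = Multiplicative.ofAdd ((G.era s).length : ℤ) := by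
  induction s with
  | nil => simp
  | cons e q ih =>
    by_cases h : G.o e = G.t e
    · rw [G.labelProd_cons, ih, G.era_cons_loop h]
      simp [lenLab, h, ← ofAdd_add]
    · rw [G.labelProd_cons, ih, G.era_cons_nl h, List.length_cons,
        show G.lenLab e = Multiplicative.ofAdd 1 from by simp [lenLab, h],
        ← ofAdd_add]
      congr 1
      push_cast
      ring

lemma lenLab_comm (hqa : G.QuasiAcyclic) (hpb : G.TwoPathBounded)
    (htr : ¬ G.HasTriangle) : G.IsCommutative (G.lenLab) := by
  intro u v p₁ p₂ h₁ h₂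
  rw [G.labelProd_lenLab, G.labelProd_lenLab,
    G.era_length_eq hqa hpb htr h₁ h₂]

/-- potential labelings -/
noncomputable def potLab (g : G.V → ℤ) : G.E → Multiplicative ℤ :=
  fun e => Multiplicative.ofAdd (g (G.t e) - g (G.o e))

lemma labelProd_potLab_path (g : G.V → ℤ) {p : List G.E} {u v : G.V}
    (hp : G.IsPath p u v) :
    G.labelProd (G.potLab g) p = Multiplicative.ofAdd (g v - g u) := by
  induction p generalizing u with
  | nil => rw [G.isPath_nil.mp hp]; simp
  | cons e q ih =>
    rcases (G.isPath_cons).mp hp with ⟨rfl, hp'⟩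
    rw [G.labelProd_cons, ih hp',
      show G.potLab g e = Multiplicative.ofAdd (g (G.t e) - g (G.o e)) from rfl,
      ← ofAdd_add]
    congr 1
    ring

lemma potLab_comm (g : G.V → ℤ) : G.IsCommutative (G.potLab g) := by
  intro u v p₁ p₂ h₁ h₂
  rw [G.labelProd_potLab_path g h₁, G.labelProd_potLab_path g h₂]

lemma labelProd_potLab (g : G.V → ℤ) (s : List G.E) :
    G.labelProd (G.potLab g) s =
      Multiplicative.ofAdd (((G.era s).map fun e => g (G.t e) - g (G.o e)).sum) := by
  induction s with
  | nil => simp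
  | cons e q ih =>
    by_cases h : G.o e = G.t e
    · rw [G.labelProd_cons, ih, G.era_cons_loop h,
        show G.potLab g e = Multiplicative.ofAdd (g (G.t e) - g (G.o e)) from rfl, h]
      simp
    · rw [G.labelProd_cons, ih, G.era_cons_nl h, List.map_cons, List.sum_cons,
        show G.potLab g e = Multiplicative.ofAdd (g (G.t e) - g (G.o e)) from rfl,
        ← ofAdd_add]

end OrientedGraph

end AuxCommProof

section AuxCommProof2

namespace OrientedGraph

attribute [local instance] Classical.propDecidable

variable (G : OrientedGraph) (R : Finset (List G.E × List G.E))

/-- one rewriting step on two-letter loop-free words, induced by `R` -/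
def Step (p q : G.E × G.E) : Prop :=
  ∃ r ∈ R, G.era r.1 = [p.1, p.2] ∧ G.era r.2 = [q.1, q.2]

/-- the test monoid: 1, letters, classes of 2-letter words, and zero -/
inductive MM (G : OrientedGraph) (R : Finset (List G.E × List G.E)) : Type
  | one : MM G R
  | letter : G.E → MM G R
  | cls : Quot (G.Step R) → MM G R
  | zero : MM G R

noncomputable def MM.mul : MM G R → MM G R → MM G R
  | .one, x => x
  | x, .one => x
  | .letter a, .letter b => .cls (Quot.mk _ (a, b))
  | _, _ => .zero

@[simp] lemma MM.one_mul' (x : MM G R) : MM.mul G R MM.one x = x := by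
  cases x <;> rfl

@[simp] lemma MM.mul_one' (x : MM G R) : MM.mul G R x MM.one = x := by
  cases x <;> rfl

noncomputable instance : Monoid (MM G R) where
  mul := MM.mul G R
  one := MM.one
  mul_assoc a b c := by cases a <;> cases b <;> cases c <;> rfl
  one_mul a := by cases a <;> rfl
  mul_one a := by cases a <;> rfl

/-- the test labeling -/
noncomputable def emLab : G.E → MM G R :=
  fun e => if G.o e = G.t e then MM.one else MM.letter e

/-- value of a loop-free word in the test monoid -/
noncomputable def emb : List G.E → MM G R
  | [] => MM.one
  | [x] => MM.letter x
  | [x, y] => MM.cls (Quot.mk _ (x, y))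
  | _ :: _ :: _ :: _ => MM.zero

lemma labelProd_emLab (s : List G.E) :
    G.labelProd (G.emLab R) s = G.emb R (G.era s) := by
  induction s with
  | nil => rfl
  | cons e q ih =>
    rw [G.labelProd_cons, ih]
    by_cases h : G.o e = G.t e
    · rw [G.era_cons_loop h]
      simp only [emLab, if_pos h]
      exact MM.one_mul' G R _
    · rw [G.era_cons_nl h]
      simp only [emLab, if_neg h]
      show MM.mul G R (MM.letter e) _ = _
      rcases hq : G.era q with - | ⟨x, - | ⟨y, - | -⟩⟩ <;>
        first
          | exact MM.mul_one' G R _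
          | rfl

lemma emb_of_long {s : List G.E} (h : 3 ≤ s.length) : G.emb R s = MM.zero := by
  rcases s with - | ⟨x, - | ⟨y, - | ⟨z, l⟩⟩⟩
  · simp at h
  · simp at h
  · simp at h
  · rfl

lemma exists_potential {V : Type} {a b c d : V} (hab : a ≠ b) (hcd : c ≠ d)
    (hne : (a, b) ≠ (c, d)) : ∃ g : V → ℤ, g b - g a ≠ g d - g c := by
  by_cases hbd : b = d
  · have hac : a ≠ c := fun h => hne (by rw [h, hbd])
    have hda : d ≠ a := fun h => hab (by rw [hbd, h])
    refine ⟨fun v => if v = a then 1 else 0, ?_⟩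
    norm_num [Ne.symm hab, hda, Ne.symm hac]
  · have hdb : d ≠ b := fun h => hbd h.symm
    refine ⟨fun v => if v = b then 1 else 0, ?_⟩
    rcases Classical.em (c = b) with h | h
    · subst h
      norm_num [hab, Ne.symm hab, hdb]
    · norm_num [hab, Ne.symm hab, hdb, h]

lemma relations_hold (hqa : G.QuasiAcyclic) (hpb : G.TwoPathBounded)
    (hme : ¬ G.HasMultipleEdges) (htr : ¬ G.HasTriangle)
    (hR : G.IsComplete R) :
    ∀ r ∈ R, G.labelProd (G.emLab R) r.1 = G.labelProd (G.emLab R) r.2 := by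
  intro r hr
  have hlen : (G.era r.1).length = (G.era r.2).length := by
    have hc := (hR (Multiplicative ℤ) G.lenLab).mp (G.lenLab_comm hqa hpb htr) r hr
    rw [G.labelProd_lenLab, G.labelProd_lenLab] at hc
    exact_mod_cast Multiplicative.ofAdd.injective hc
  rw [G.labelProd_emLab, G.labelProd_emLab]
  rcases Nat.lt_or_ge (G.era r.1).length 3 with hlt | hge
  · have h3 : (G.era r.1).length = 0 ∨ (G.era r.1).length = 1 ∨
        (G.era r.1).length = 2 := by omega
    rcases h3 with h | h | h
    · rw [List.length_eq_zero_iff.mp h,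
        List.length_eq_zero_iff.mp (by omega : (G.era r.2).length = 0)]
    · obtain ⟨e, he⟩ := List.length_eq_one_iff.mp h
      obtain ⟨f, hf⟩ := List.length_eq_one_iff.mp (by omega : (G.era r.2).length = 1)
      rw [he, hf]
      have : e = f := by
        by_contra hne
        have hnle : G.o e ≠ G.t e := (G.mem_era (he ▸ List.mem_singleton_self e)).2
        have hnlf : G.o f ≠ G.t f := (G.mem_era (hf ▸ List.mem_singleton_self f)).2
        have hpair : (G.o e, G.t e) ≠ (G.o f, G.t f) := by
          intro hp
          exact hme ⟨e, f, hne, (congrArg Prod.snd hp), (congrArg Prod.fst hp),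
            fun h => hnle h.symm⟩
        obtain ⟨g, hg⟩ := exists_potential hnle hnlf hpair
        have hc := (hR (Multiplicative ℤ) (G.potLab g)).mp (G.potLab_comm g) r hr
        rw [G.labelProd_potLab, G.labelProd_potLab, he, hf] at hc
        have := Multiplicative.ofAdd.injective hc
        simp at this
        exact hg this
      rw [this]
    · obtain ⟨x, y, hxy⟩ := List.length_eq_two.mp h
      obtain ⟨x', y', hxy'⟩ := List.length_eq_two.mp (by omega : (G.era r.2).length = 2)
      rw [hxy, hxy']
      show MM.cls (Quot.mk _ (x, y)) = MM.cls (Quot.mk _ (x', y'))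
      exact congrArg MM.cls (Quot.sound ⟨r, hr, hxy, hxy'⟩)
  · rw [G.emb_of_long R hge, G.emb_of_long R (by omega : 3 ≤ (G.era r.2).length)]

lemma rhomboid_eqvGen (hcomm : G.IsCommutative (G.emLab R))
    {ρ : G.E × G.E × G.E × G.E} (hρ : G.IsRhomboid ρ) :
    Relation.EqvGen (G.Step R) (ρ.1, ρ.2.1) (ρ.2.2.1, ρ.2.2.2) := by
  obtain ⟨a, b, c, d⟩ := ρ
  obtain ⟨h1, h2, h3, h4, h5, h6, h7, h8, h9, h10⟩ := hρ
  simp only at h1 h2 h3 h4 h5 h6 h7 h8 h9 h10 ⊢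
  have nb : G.o b ≠ G.t b := fun h => h9 (h3.trans (h.trans h2))
  have nc : G.o c ≠ G.t c := fun h => h6 (h1.trans (h.trans h4))
  have P1 : G.IsPath [a, b] (G.o a) (G.t b) :=
    (G.isPath_cons).mpr ⟨rfl, (G.isPath_cons).mpr ⟨h3, G.isPath_nil.mpr rfl⟩⟩
  have P2 : G.IsPath [c, d] (G.o a) (G.t b) :=
    (G.isPath_cons).mpr ⟨h1, (G.isPath_cons).mpr ⟨h4, G.isPath_nil.mpr (by rw [h2])⟩⟩
  have hc := hcomm (G.o a) (G.t b) [a, b] [c, d] P1 P2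
  rw [G.labelProd_emLab, G.labelProd_emLab] at hc
  rw [G.era_cons_nl h5, G.era_cons_nl nb, G.era_cons_nl nc, G.era_cons_nl h10] at hc
  simp only [era_nil] at hc
  have : Quot.mk (G.Step R) (a, b) = Quot.mk (G.Step R) (c, d) := by
    have h := hc
    simp only [emb] at h
    exact MM.cls.inj h
  exact Quot.eq.mp this

end OrientedGraph

end AuxCommProof2

section AuxCommProof3

namespace OrientedGraph

attribute [local instance] Classical.propDecidable

variable (G : OrientedGraph) (R : Finset (List G.E × List G.E))

/-- indicator vector of a pair of edges -/
noncomputable def chi (p : G.E × G.E) : G.E × G.E → ℚ :=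
  fun q => if q = p then 1 else 0

/-- generators of the span -/
def gens : Set (G.E × G.E → ℚ) :=
  {v | ∃ p q, G.Step R p q ∧ v = G.chi p - G.chi q}

lemma mem_span_of_eqvGen {x y : G.E × G.E}
    (h : Relation.EqvGen (G.Step R) x y) :
    G.chi x - G.chi y ∈ Submodule.span ℚ (G.gens R) := by
  induction h with
  | rel p q hpq => exact Submodule.subset_span ⟨p, q, hpq, rfl⟩
  | refl p => simp
  | symm p q _ ih => rw [← neg_sub]; exact neg_mem ih
  | trans p q s _ _ ih1 ih2 =>
      have := add_mem ih1 ih2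
      rwa [sub_add_sub_cancel] at this

/-- the relations of `R` whose two sides have loop-erasures of length two -/
noncomputable def Rtwo : Finset (List G.E × List G.E) :=
  R.filter fun r => (G.era r.1).length = 2 ∧ (G.era r.2).length = 2

noncomputable def fvec (r : List G.E × List G.E) : G.E × G.E → ℚ :=
  G.chi ((G.era r.1).getD 0 (Classical.arbitrary G.E),
         (G.era r.1).getD 1 (Classical.arbitrary G.E)) -
  G.chi ((G.era r.2).getD 0 (Classical.arbitrary G.E),
         (G.era r.2).getD 1 (Classical.arbitrary G.E))

lemma gens_subset : G.gens R ⊆ ↑((G.Rtwo R).image (G.fvec)) := by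
  rintro v ⟨p, q, ⟨r, hr, h1, h2⟩, rfl⟩
  simp only [Finset.coe_image, Set.mem_image, Finset.mem_coe]
  refine ⟨r, Finset.mem_filter.mpr ⟨hr, by rw [h1, h2]; simp⟩, ?_⟩
  rw [fvec, h1, h2]
  simp

lemma card_le_Rtwo (F : Finset (G.E × G.E × G.E × G.E))
    (hrh : ∀ ρ ∈ F, G.IsRhomboid ρ)
    (hdis : ∀ ρ ∈ F, ∀ ρ' ∈ F, ρ ≠ ρ' → G.RhDisjoint ρ ρ')
    (hconn : ∀ ρ ∈ F, Relation.EqvGen (G.Step R) (ρ.1, ρ.2.1) (ρ.2.2.1, ρ.2.2.2)) :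
    F.card ≤ (G.Rtwo R).card := by
  classical
  set W : Submodule ℚ (G.E × G.E → ℚ) :=
    Submodule.span ℚ ↑((G.Rtwo R).image (G.fvec)) with hW
  set P : (G.E × G.E × G.E × G.E) → G.E × G.E := fun ρ => (ρ.1, ρ.2.1) with hP
  set Q : (G.E × G.E × G.E × G.E) → G.E × G.E := fun ρ => (ρ.2.2.1, ρ.2.2.2) with hQ
  set u : ↥F → (G.E × G.E → ℚ) := fun ρ => G.chi (P ρ.1) - G.chi (Q ρ.1) with hu
  have hPQ : ∀ ρ ∈ F, P ρ ≠ Q ρ := by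
    intro ρ hρ h
    obtain ⟨h1, h2, h3, h4, h5, h6, h7, h8, h9, h10⟩ := hrh ρ hρ
    have hac : ρ.1 = ρ.2.2.1 := congrArg Prod.fst h
    exact h8 (by rw [hac, h4])
  have humem : ∀ ρ : ↥F, u ρ ∈ W := by
    intro ρ
    have := G.mem_span_of_eqvGen R (hconn ρ.1 ρ.2)
    exact Submodule.span_mono (G.gens_subset R) this
  have hind : LinearIndependent ℚ u := by
    rw [Fintype.linearIndependent_iff]
    intro g hg i
    have hgi := congrFun hg (P i.1)
    rw [Finset.sum_apply] at hgi
    rw [Finset.sum_eq_single i] at hgi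
    · simp only [u, Pi.smul_apply, Pi.sub_apply, chi, if_pos rfl,
        if_neg (hPQ i.1 i.2), Pi.zero_apply] at hgi
      simpa using hgi
    · intro j _ hji
      have hne : j.1 ≠ i.1 := fun h => hji (Subtype.ext h)
      obtain ⟨d1, d2, d3, d4⟩ := hdis i.1 i.2 j.1 j.2 (fun h => hne h.symm)
      have hPP : P i.1 ≠ P j.1 := by
        intro h
        rw [hP] at h
        simp only [Prod.mk.injEq] at h
        rcases d1 with h' | h'
        · exact h' h.1
        · exact h' h.2
      have hPQ' : P i.1 ≠ Q j.1 := by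
        intro h
        rw [hP, hQ] at h
        simp only [Prod.mk.injEq] at h
        rcases d2 with h' | h'
        · exact h' h.1
        · exact h' h.2
      simp only [u, Pi.smul_apply, Pi.sub_apply, chi, if_neg hPP, if_neg hPQ',
        smul_eq_mul, Pi.zero_apply]
      ring
    · intro h
      exact absurd (Finset.mem_univ i) h
  have hind' : LinearIndependent ℚ (fun ρ : ↥F => (⟨u ρ, humem ρ⟩ : W)) := by
    apply LinearIndependent.of_comp W.subtype
    exact hind
  have hcard : Fintype.card ↥F ≤ Module.finrank ℚ W :=
    hind'.fintype_card_le_finrank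
  have hfr : Module.finrank ℚ W ≤ ((G.Rtwo R).image (G.fvec)).card := by
    have := finrank_span_finset_le_card (R := ℚ) ((G.Rtwo R).image (G.fvec))
    exact this
  calc F.card = Fintype.card ↥F := (Fintype.card_coe F).symm
    _ ≤ Module.finrank ℚ W := hcard
    _ ≤ ((G.Rtwo R).image (G.fvec)).card := hfr
    _ ≤ (G.Rtwo R).card := Finset.card_image_le

end OrientedGraph

end AuxCommProof3
/-- Theorem: for a complete system of relations `R` of a quasi-acyclic, 2-path-bounded
graph without multiple edges and triangles, `|R_N| ≥ 𝔯𝔥(G)`, where `R_N` consists of the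
relations whose both sides contain a non-loop edge. -/
theorem card_RN_ge_rhNum (G : OrientedGraph) (hqa : G.QuasiAcyclic)
    (hpb : G.TwoPathBounded) (hme : ¬ G.HasMultipleEdges) (htr : ¬ G.HasTriangle)
    (R : Finset (List G.E × List G.E)) (hR : G.IsComplete R) :
    G.rhNum ≤
      Set.ncard {r : List G.E × List G.E | r ∈ R ∧ G.BothSidesNonLoop r} := by
  classical
  have hset : {r : List G.E × List G.E | r ∈ R ∧ G.BothSidesNonLoop r} =
      ↑(R.filter fun r => G.BothSidesNonLoop r) := by
    ext r
    simp [Finset.mem_filter]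
  rw [hset, Set.ncard_coe_finset]
  have hcomm : G.IsCommutative (G.emLab R) :=
    (hR (OrientedGraph.MM G R) (G.emLab R)).mpr (G.relations_hold R hqa hpb hme htr hR)
  unfold OrientedGraph.rhNum
  apply csSup_le
  · exact ⟨0, ∅, by simp, by simp, rfl⟩
  rintro n ⟨F, hrh, hdis, rfl⟩
  have h1 : F.card ≤ (G.Rtwo R).card :=
    G.card_le_Rtwo R F hrh hdis (fun ρ hρ => G.rhomboid_eqvGen R hcomm (hrh ρ hρ))
  refine h1.trans (Finset.card_le_card ?_)
  intro r hr
  obtain ⟨hrR, hl1, hl2⟩ := Finset.mem_filter.mp hr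
  refine Finset.mem_filter.mpr ⟨hrR, ?_, ?_⟩
  · obtain ⟨e, he⟩ := List.exists_mem_of_ne_nil (G.era r.1)
      (fun h => by simp [h] at hl1)
    exact ⟨e, (G.mem_era he).1, (G.mem_era he).2⟩
  · obtain ⟨e, he⟩ := List.exists_mem_of_ne_nil (G.era r.2)
      (fun h => by simp [h] at hl2)
    exact ⟨e, (G.mem_era he).1, (G.mem_era he).2⟩
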